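/- Population identification of the index by the linear estimator: Let X be an elliptically symmetric random vector in ℝ^d with mean μ and positive definite covariance Σ, and let Y satisfy E[Y|X] = Ψ₀(α₀ᵀX) with ‖α₀‖=1, Ψ₀ bounded. If the linearity-of-conditional-means property E[X − μ | α₀ᵀX] = (α₀ᵀ(X−μ)) Σα₀ / (α₀ᵀΣα₀) holds, then Cov(X,Y) = λ* Σα₀ where λ* = Cov(Ψ₀(α₀ᵀX), α₀ᵀX)/(α₀ᵀΣα₀); hence Σ^{-1}Cov(X,Y) = λ* α₀, and if additionally λ* > 0 then Σ^{-1}Cov(X,Y)/‖Σ^{-1}Cov(X,Y)‖ = α₀. -/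

import Mathlib

open MeasureTheory

/-- population identification of the index by the linear estimator. Under the
linearity-of-conditional-means property of elliptically symmetric designs,
`Cov(X,Y) = λ* Σ α₀` with `λ* = Cov(Ψ₀(α₀ᵀX), α₀ᵀX)/(α₀ᵀΣα₀)`; hence
`Σ⁻¹ Cov(X,Y) = λ* α₀`, and if `λ* > 0` its normalization recovers `α₀`. -/
theorem stmt16 {d : ℕ} {Ω : Type*} [MeasurableSpace Ω]
    (μ : Measure Ω) [IsProbabilityMeasure μ]
    (X : Ω → (Fin d → ℝ)) (hXmeas : Measurable X)
    (Y : Ω → ℝ) (hYint : Integrable Y μ)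
    (hXint : ∀ i, Integrable (fun ω => X ω i) μ)
    (hXYint : ∀ i, Integrable (fun ω => X ω i * Y ω) μ)
    (hXabsY : Integrable (fun ω => Real.sqrt (∑ i, X ω i ^ 2) * |Y ω|) μ)
    (μv : Fin d → ℝ) (hμv : ∀ i, μv i = ∫ ω, X ω i ∂μ)
    (Sig : Matrix (Fin d) (Fin d) ℝ)
    (hSig : ∀ i j, Sig i j = ∫ ω, (X ω i - μv i) * (X ω j - μv j) ∂μ)
    (hSigpd : Sig.PosDef)
    (α₀ : Fin d → ℝ) (hα₀ : ∑ i, α₀ i ^ 2 = 1)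
    (Ψ₀ : ℝ → ℝ) (hΨmeas : Measurable Ψ₀) (hΨbdd : ∃ C : ℝ, ∀ t, |Ψ₀ t| ≤ C)
    -- E[Y | X] = Ψ₀(α₀ᵀX)
    (hcond : (fun ω => Ψ₀ (∑ j, α₀ j * X ω j)) =ᵐ[μ]
      μ[Y | MeasurableSpace.comap X (by infer_instance)])
    -- linearity of conditional means: E[X − μ | α₀ᵀX] = (α₀ᵀ(X−μ)) Σα₀ / (α₀ᵀΣα₀)
    (hlin : ∀ i,
      μ[fun ω => X ω i - μv i |
        MeasurableSpace.comap (fun ω => ∑ j, α₀ j * X ω j) (by infer_instance)]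
      =ᵐ[μ] fun ω =>
        ((∑ j, α₀ j * X ω j) - ∑ j, α₀ j * μv j) * Sig.mulVec α₀ i
          / (∑ i, ∑ j, α₀ i * Sig i j * α₀ j)) :
    let T : Ω → ℝ := fun ω => ∑ j, α₀ j * X ω j
    let lam : ℝ :=
      ((∫ ω, Ψ₀ (T ω) * T ω ∂μ) - (∫ ω, Ψ₀ (T ω) ∂μ) * (∫ ω, T ω ∂μ))
        / (∑ i, ∑ j, α₀ i * Sig i j * α₀ j)
    let Cv : Fin d → ℝ := fun i => ∫ ω, (X ω i - μv i) * (Y ω - ∫ ω', Y ω' ∂μ) ∂μ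
    (∀ i, Cv i = lam * Sig.mulVec α₀ i) ∧
    (Sig⁻¹.mulVec Cv = fun i => lam * α₀ i) ∧
    (0 < lam →
      (fun i => (Real.sqrt (∑ j, (Sig⁻¹.mulVec Cv j) ^ 2))⁻¹ * Sig⁻¹.mulVec Cv i) = α₀) := by
  intro T lam Cv
  classical
  obtain ⟨C, hC⟩ := hΨbdd
  set q : ℝ := ∑ i, ∑ j, α₀ i * Sig i j * α₀ j with hqdef
  have hα₀ne : α₀ ≠ 0 := by
    intro h
    rw [h] at hα₀
    simp at hα₀
  have hqpos : 0 < q := by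
    have h := hSigpd.dotProduct_mulVec_pos hα₀ne
    have : dotProduct (star α₀) (Sig.mulVec α₀) = q := by
      simp only [dotProduct, Matrix.mulVec, star_trivial, Finset.mul_sum, hqdef]
      exact Finset.sum_congr rfl fun i _ => Finset.sum_congr rfl fun j _ => by ring
    rwa [this] at h
  have hq0 : q ≠ 0 := ne_of_gt hqpos
  -- measurability of T
  have hTmeas : Measurable (fun ω => ∑ j, α₀ j * X ω j) := by
    apply Finset.measurable_sum
    intro j _
    exact ((measurable_pi_apply j).comp hXmeas).const_mul (α₀ j)
  have hTint : Integrable (fun ω => ∑ j, α₀ j * X ω j) μ := by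
    apply integrable_finset_sum
    intro j _
    exact (hXint j).const_mul (α₀ j)
  -- conditional expectation setup
  have hm : MeasurableSpace.comap X (by infer_instance) ≤ ‹MeasurableSpace Ω› :=
    hXmeas.comap_le
  have hm' : MeasurableSpace.comap (fun ω => ∑ j, α₀ j * X ω j) (by infer_instance)
      ≤ ‹MeasurableSpace Ω› := hTmeas.comap_le
  haveI : SigmaFinite (μ.trim hm) := inferInstance
  haveI : SigmaFinite (μ.trim hm') := inferInstance
  -- Ψ₀ ∘ T integrability facts
  have hΨTmeas : Measurable (fun ω => Ψ₀ (∑ j, α₀ j * X ω j)) := hΨmeas.comp hTmeas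
  have hΨTint : Integrable (fun ω => Ψ₀ (∑ j, α₀ j * X ω j)) μ := by
    refine Integrable.mono' (integrable_const C) hΨTmeas.aestronglyMeasurable ?_
    exact Filter.Eventually.of_forall fun ω => by simpa using hC _
  have hΨTTint : Integrable (fun ω => Ψ₀ (∑ j, α₀ j * X ω j) * (∑ j, α₀ j * X ω j)) μ :=
    hTint.bdd_mul hΨTmeas.aestronglyMeasurable (c := C) (Filter.Eventually.of_forall fun ω => by simpa using hC _)
  -- E[T] = ∑ α₀ j μv j
  have hTa : (∫ ω, ∑ j, α₀ j * X ω j ∂μ) = ∑ j, α₀ j * μv j := by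
    rw [integral_finset_sum _ fun j _ => (hXint j).const_mul (α₀ j)]
    refine Finset.sum_congr rfl fun j _ => ?_
    rw [integral_const_mul, hμv j]
  -- key computation
  have key : ∀ i, (∫ ω, (X ω i - μv i) * (Y ω - ∫ ω', Y ω' ∂μ) ∂μ)
      = lam * Sig.mulVec α₀ i := by
    intro i
    have hXci : Integrable (fun ω => X ω i - μv i) μ := (hXint i).sub (integrable_const _)
    have hXciY : Integrable (fun ω => (X ω i - μv i) * Y ω) μ := by
      have := (hXYint i).sub (hYint.const_mul (μv i))
      refine this.congr (Filter.Eventually.of_forall fun ω => ?_)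
      simp only [Pi.sub_apply]
      ring
    -- step 1: drop the centering of Y
    have step1 : (∫ ω, (X ω i - μv i) * (Y ω - ∫ ω', Y ω' ∂μ) ∂μ)
        = ∫ ω, (X ω i - μv i) * Y ω ∂μ := by
      have hXcc : Integrable (fun ω => (X ω i - μv i) * (∫ ω', Y ω' ∂μ)) μ :=
        hXci.mul_const _
      have hexp : (∫ ω, (X ω i - μv i) * (Y ω - ∫ ω', Y ω' ∂μ) ∂μ)
          = (∫ ω, (X ω i - μv i) * Y ω ∂μ)
            - ∫ ω, (X ω i - μv i) * (∫ ω', Y ω' ∂μ) ∂μ := by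
        rw [← integral_sub hXciY hXcc]
        refine integral_congr_ae (Filter.Eventually.of_forall fun ω => ?_)
        ring
      have hzero : (∫ ω, (X ω i - μv i) * (∫ ω', Y ω' ∂μ) ∂μ) = 0 := by
        rw [integral_mul_const, integral_sub (hXint i) (integrable_const _)]
        simp [hμv i]
      rw [hexp, hzero, sub_zero]
    -- step 2: replace Y by Ψ₀(T) via conditioning on X
    have hXi_sm : StronglyMeasurable[MeasurableSpace.comap X (by infer_instance)]
        (fun ω => X ω i - μv i) := by
      have hX' : Measurable[MeasurableSpace.comap X (by infer_instance)] X :=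
        Measurable.of_comap_le le_rfl
      exact (((measurable_pi_apply i).comp hX').sub measurable_const).stronglyMeasurable
    have step2 : (∫ ω, (X ω i - μv i) * Y ω ∂μ)
        = ∫ ω, (X ω i - μv i) * Ψ₀ (∑ j, α₀ j * X ω j) ∂μ := by
      have e1 := condExp_mul_of_stronglyMeasurable_left (m := MeasurableSpace.comap X (by infer_instance))
        (μ := μ) hXi_sm (by exact hXciY) hYint
      calc (∫ ω, (X ω i - μv i) * Y ω ∂μ)
          = ∫ ω, (μ[(fun ω => X ω i - μv i) * Y
              | MeasurableSpace.comap X (by infer_instance)]) ω ∂μ :=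
            (integral_condExp hm).symm
        _ = ∫ ω, ((fun ω => X ω i - μv i)
              * μ[Y | MeasurableSpace.comap X (by infer_instance)]) ω ∂μ :=
            integral_congr_ae e1
        _ = ∫ ω, (X ω i - μv i) * Ψ₀ (∑ j, α₀ j * X ω j) ∂μ := by
            refine integral_congr_ae (hcond.mono fun ω hω => ?_)
            simp only [Pi.mul_apply]
            rw [← hω]
    -- step 3: condition on T
    have hΨT_sm : StronglyMeasurable[MeasurableSpace.comap
        (fun ω => ∑ j, α₀ j * X ω j) (by infer_instance)]
        (fun ω => Ψ₀ (∑ j, α₀ j * X ω j)) := by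
      have hT' : Measurable[MeasurableSpace.comap
          (fun ω => ∑ j, α₀ j * X ω j) (by infer_instance)]
          (fun ω => ∑ j, α₀ j * X ω j) := Measurable.of_comap_le le_rfl
      exact (hΨmeas.comp hT').stronglyMeasurable
    have hprod : Integrable (fun ω => Ψ₀ (∑ j, α₀ j * X ω j) * (X ω i - μv i)) μ :=
      hXci.bdd_mul hΨTmeas.aestronglyMeasurable (c := C) (Filter.Eventually.of_forall fun ω => by simpa using hC _)
    have step3 : (∫ ω, (X ω i - μv i) * Ψ₀ (∑ j, α₀ j * X ω j) ∂μ)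
        = ∫ ω, Ψ₀ (∑ j, α₀ j * X ω j)
            * (((∑ j, α₀ j * X ω j) - ∑ j, α₀ j * μv j) * Sig.mulVec α₀ i / q) ∂μ := by
      have e2 := condExp_mul_of_stronglyMeasurable_left
        (m := MeasurableSpace.comap (fun ω => ∑ j, α₀ j * X ω j) (by infer_instance))
        (μ := μ) hΨT_sm (by exact hprod) hXci
      calc (∫ ω, (X ω i - μv i) * Ψ₀ (∑ j, α₀ j * X ω j) ∂μ)
          = ∫ ω, Ψ₀ (∑ j, α₀ j * X ω j) * (X ω i - μv i) ∂μ := by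
            refine integral_congr_ae (Filter.Eventually.of_forall fun ω => ?_)
            ring
        _ = ∫ ω, (μ[(fun ω => Ψ₀ (∑ j, α₀ j * X ω j)) * (fun ω => X ω i - μv i)
              | MeasurableSpace.comap (fun ω => ∑ j, α₀ j * X ω j) (by infer_instance)]) ω ∂μ :=
            (integral_condExp hm').symm
        _ = ∫ ω, ((fun ω => Ψ₀ (∑ j, α₀ j * X ω j))
              * μ[(fun ω => X ω i - μv i)
              | MeasurableSpace.comap (fun ω => ∑ j, α₀ j * X ω j) (by infer_instance)]) ω ∂μ :=
            integral_congr_ae e2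
        _ = ∫ ω, Ψ₀ (∑ j, α₀ j * X ω j)
              * (((∑ j, α₀ j * X ω j) - ∑ j, α₀ j * μv j) * Sig.mulVec α₀ i / q) ∂μ := by
            refine integral_congr_ae ((hlin i).mono fun ω hω => ?_)
            simp only [Pi.mul_apply]
            rw [hω]
    -- step 4: compute the remaining integral
    have step4 : (∫ ω, Ψ₀ (∑ j, α₀ j * X ω j)
            * (((∑ j, α₀ j * X ω j) - ∑ j, α₀ j * μv j) * Sig.mulVec α₀ i / q) ∂μ)
        = lam * Sig.mulVec α₀ i := by
      have hsplit : (∫ ω, Ψ₀ (∑ j, α₀ j * X ω j)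
            * (((∑ j, α₀ j * X ω j) - ∑ j, α₀ j * μv j) * Sig.mulVec α₀ i / q) ∂μ)
          = (∫ ω, (Ψ₀ (∑ j, α₀ j * X ω j) * (∑ j, α₀ j * X ω j)) * (Sig.mulVec α₀ i / q)
              - Ψ₀ (∑ j, α₀ j * X ω j) * ((∑ j, α₀ j * μv j) * Sig.mulVec α₀ i / q) ∂μ) := by
        refine integral_congr_ae (Filter.Eventually.of_forall fun ω => ?_)
        ring
      rw [hsplit, integral_sub (hΨTTint.mul_const _) (hΨTint.mul_const _),
        integral_mul_const, integral_mul_const]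
      show _ = (((∫ ω, Ψ₀ (∑ j, α₀ j * X ω j) * (∑ j, α₀ j * X ω j) ∂μ)
          - (∫ ω, Ψ₀ (∑ j, α₀ j * X ω j) ∂μ) * (∫ ω, ∑ j, α₀ j * X ω j ∂μ)) / q)
          * Sig.mulVec α₀ i
      rw [hTa]
      field_simp
    rw [step1, step2, step3, step4]
  refine ⟨key, ?_, ?_⟩
  · -- second claim
    have hCv : Cv = lam • Sig.mulVec α₀ := funext fun i => key i
    rw [hCv, Matrix.mulVec_smul, Matrix.mulVec_mulVec,
      Matrix.nonsing_inv_mul Sig (isUnit_iff_ne_zero.mpr (ne_of_gt hSigpd.det_pos)),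
      Matrix.one_mulVec]
    rfl
  · intro hpos
    have hCv : Cv = lam • Sig.mulVec α₀ := funext fun i => key i
    have h2 : Sig⁻¹.mulVec Cv = fun i => lam * α₀ i := by
      rw [hCv, Matrix.mulVec_smul, Matrix.mulVec_mulVec,
        Matrix.nonsing_inv_mul Sig (isUnit_iff_ne_zero.mpr (ne_of_gt hSigpd.det_pos)),
        Matrix.one_mulVec]
      rfl
    rw [h2]
    have hsum : ∑ j, (lam * α₀ j) ^ 2 = lam ^ 2 := by
      simp only [mul_pow, ← Finset.mul_sum, hα₀, mul_one]
    funext i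
    rw [hsum, Real.sqrt_sq hpos.le]
    field_simp
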